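/- arXiv:1406.0885 — 2 statements merged into one kernel-verified Lean document; each statement's English description precedes it below -/
import Mathlib

section
/- Let ω : [0,T] → ℝ be a continuous path with ω(0) = 0 and b < 0 < b̄. Set α₀ = b/(b̄−b) and α₁ = 1/(b̄−b). Then the indicator of the event {sup_{t≤T} ω(t) ≥ b̄ and inf_{t≤T} ω(t) > b} is bounded above by α₁·ω(T) − α₀ − α₁·(ω(T)−b̄)·1_{H_{b̄} < H_b ∧ T} − α₁·(ω(T)−b)·1_{H_b < H_{b̄} ∧ T}. -/
open Set

noncomputable def pos (x : ℝ) : ℝ := max x 0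

open Classical in
noncomputable def ind (P : Prop) : ℝ := if P then 1 else 0

/-- First hitting time (before time `T`) of level `x` by the path `ω`, valued in `EReal`
(`⊤` if the level is not hit in `[0,T]`). -/
noncomputable def hit (ω : ℝ → ℝ) (T x : ℝ) : EReal :=
  sInf {s : EReal | ∃ t : ℝ, s = (t : EReal) ∧ 0 ≤ t ∧ t ≤ T ∧ ω t = x}

lemma ind_le_one (P : Prop) : ind P ≤ 1 := by
  unfold ind; split <;> norm_num

lemma ind_of_pos {P : Prop} (h : P) : ind P = 1 := by simp [ind, h]

lemma ind_of_neg {P : Prop} (h : ¬ P) : ind P = 0 := by simp [ind, h]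

lemma hit_top {ω : ℝ → ℝ} {T x : ℝ} (h : ∀ t, 0 ≤ t → t ≤ T → ω t ≠ x) :
    hit ω T x = ⊤ := by
  unfold hit
  suffices hs : {s : EReal | ∃ t : ℝ, s = (t : EReal) ∧ 0 ≤ t ∧ t ≤ T ∧ ω t = x} = ∅ by
    rw [hs]; exact sInf_empty
  ext s
  simp only [mem_setOf_eq, mem_empty_iff_false, iff_false, not_exists]
  rintro t ⟨rfl, h1, h2, h3⟩
  exact h t h1 h2 h3

lemma hit_eq {ω : ℝ → ℝ} {T x : ℝ} (hcont : ContinuousOn ω (Icc 0 T))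
    (h : ∃ t ∈ Icc 0 T, ω t = x) :
    ∃ t₀ ∈ Icc 0 T, ω t₀ = x ∧ hit ω T x = (t₀ : EReal) := by
  set S : Set ℝ := Icc 0 T ∩ ω ⁻¹' {x} with hS
  have hSne : S.Nonempty := by
    obtain ⟨t, ht, hωt⟩ := h
    exact ⟨t, ht, by simpa using hωt⟩
  have hSclosed : IsClosed S :=
    hcont.preimage_isClosed_of_isClosed isClosed_Icc isClosed_singleton
  have hScompact : IsCompact S :=
    isCompact_Icc.of_isClosed_subset hSclosed inter_subset_left
  have ht₀S : sInf S ∈ S := hScompact.sInf_mem hSne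
  refine ⟨sInf S, ht₀S.1, by simpa using ht₀S.2, ?_⟩
  apply IsLeast.csInf_eq
  constructor
  · exact ⟨sInf S, rfl, ht₀S.1.1, ht₀S.1.2, by simpa using ht₀S.2⟩
  · rintro s ⟨t, rfl, h1, h2, h3⟩
    exact_mod_cast csInf_le hScompact.bddBelow ⟨⟨h1, h2⟩, by simpa using h3⟩

theorem stmt1 (T : ℝ) (hT : 0 < T) (ω : ℝ → ℝ)
    (hcont : ContinuousOn ω (Icc 0 T)) (hω0 : ω 0 = 0)
    (lb ub : ℝ) (hlb : lb < 0) (hub : 0 < ub) :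
    ind (ub ≤ sSup (ω '' Icc 0 T) ∧ lb < sInf (ω '' Icc 0 T)) ≤
      (1 / (ub - lb)) * ω T - lb / (ub - lb) -
        (1 / (ub - lb)) * (ω T - ub) *
          ind (hit ω T ub < min (hit ω T lb) (T : EReal)) -
        (1 / (ub - lb)) * (ω T - lb) *
          ind (hit ω T lb < min (hit ω T ub) (T : EReal)) := by
  have hc : (0:ℝ) < ub - lb := by linarith
  have h0mem : (0:ℝ) ∈ Icc 0 T := ⟨le_rfl, hT.le⟩
  have himg : IsCompact (ω '' Icc 0 T) := isCompact_Icc.image_of_continuousOn hcont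
  by_cases hQ2 : hit ω T lb < min (hit ω T ub) (T : EReal)
  · -- second indicator is 1; then first is 0 and sInf ≤ lb, so LHS = 0 and RHS = 0
    have hQ1 : ¬ hit ω T ub < min (hit ω T lb) (T : EReal) := by
      intro h
      have h1 : hit ω T ub < hit ω T lb := lt_of_lt_of_le h (min_le_left _ _)
      have h2 : hit ω T lb < hit ω T ub := lt_of_lt_of_le hQ2 (min_le_left _ _)
      exact absurd (h1.trans h2) (lt_irrefl _)
    have hlbhit : ∃ t ∈ Icc 0 T, ω t = lb := by
      by_contra hcon
      push_neg at hcon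
      have htop : hit ω T lb = ⊤ := hit_top (fun t h1 h2 => hcon t ⟨h1, h2⟩)
      rw [htop] at hQ2
      have : (⊤ : EReal) < (T : EReal) := lt_of_lt_of_le hQ2 (min_le_right _ _)
      exact absurd this (by simp)
    have hP : ¬ (ub ≤ sSup (ω '' Icc 0 T) ∧ lb < sInf (ω '' Icc 0 T)) := by
      rintro ⟨_, hinf⟩
      obtain ⟨t, ht, hωt⟩ := hlbhit
      have hle : sInf (ω '' Icc 0 T) ≤ lb := by
        rw [← hωt]
        exact csInf_le himg.bddBelow (mem_image_of_mem ω ht)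
      linarith
    rw [ind_of_neg hP, ind_of_neg hQ1, ind_of_pos hQ2]
    have key : (1 / (ub - lb)) * ω T - lb / (ub - lb) -
        (1 / (ub - lb)) * (ω T - ub) * 0 - (1 / (ub - lb)) * (ω T - lb) * 1 = 0 := by
      field_simp
      ring
    linarith
  · by_cases hQ1 : hit ω T ub < min (hit ω T lb) (T : EReal)
    · -- first indicator is 1 : RHS = 1
      rw [ind_of_pos hQ1, ind_of_neg hQ2]
      have key : (1 / (ub - lb)) * ω T - lb / (ub - lb) -
          (1 / (ub - lb)) * (ω T - ub) * 1 - (1 / (ub - lb)) * (ω T - lb) * 0 = 1 := by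
        field_simp
        ring
      linarith [ind_le_one (ub ≤ sSup (ω '' Icc 0 T) ∧ lb < sInf (ω '' Icc 0 T))]
    · by_cases hP : ub ≤ sSup (ω '' Icc 0 T) ∧ lb < sInf (ω '' Icc 0 T)
      · obtain ⟨hsup, hinf⟩ := hP
        -- lb is never hit
        have hlbtop : hit ω T lb = ⊤ := by
          apply hit_top
          intro t h1 h2 hωt
          have hle : sInf (ω '' Icc 0 T) ≤ lb := by
            rw [← hωt]
            exact csInf_le himg.bddBelow (mem_image_of_mem ω ⟨h1, h2⟩)
          linarith
        -- the sup is attained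
        obtain ⟨tm, htm, hωtm⟩ : ∃ tm ∈ Icc 0 T, ω tm = sSup (ω '' Icc 0 T) := by
          have hmem := himg.sSup_mem ⟨ω 0, mem_image_of_mem ω h0mem⟩
          obtain ⟨tm, htm, hωtm⟩ := hmem
          exact ⟨tm, htm, hωtm⟩
        -- ub is hit
        have hub_hit : ∃ t ∈ Icc 0 T, ω t = ub := by
          have hsub : Icc 0 tm ⊆ Icc 0 T := Icc_subset_Icc le_rfl htm.2
          have hiv := intermediate_value_Icc htm.1 (hcont.mono hsub)
          have hmem : ub ∈ Icc (ω 0) (ω tm) := by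
            rw [hω0, hωtm]; exact ⟨hub.le, hsup⟩
          obtain ⟨t, ht, hωt⟩ := hiv hmem
          exact ⟨t, hsub ht, hωt⟩
        obtain ⟨t₀, ht₀, hωt₀, hhub⟩ := hit_eq hcont hub_hit
        have hTle : (T : EReal) ≤ (t₀ : EReal) := by
          by_contra hcon
          push_neg at hcon
          apply hQ1
          rw [hhub, hlbtop, min_eq_right (le_top : (T : EReal) ≤ ⊤)]
          exact hcon
        have ht₀T : t₀ = T := le_antisymm ht₀.2 (by exact_mod_cast hTle)
        have hωT : ω T = ub := ht₀T ▸ hωt₀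
        rw [ind_of_pos ⟨hsup, hinf⟩, ind_of_neg hQ1, ind_of_neg hQ2, hωT]
        have key : (1 / (ub - lb)) * ub - lb / (ub - lb) -
            (1 / (ub - lb)) * (ub - ub) * 0 - (1 / (ub - lb)) * (ub - lb) * 0 = 1 := by
          field_simp
          ring
        linarith
      · -- LHS = 0; we show lb ≤ ω T so that RHS ≥ 0
        have hωT : lb ≤ ω T := by
          by_contra hcon
          push_neg at hcon
          have hlb_hit : ∃ t ∈ Icc 0 T, ω t = lb := by
            have hiv := intermediate_value_Icc' hT.le hcont
            have hmem : lb ∈ Icc (ω T) (ω 0) := by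
              rw [hω0]; exact ⟨hcon.le, hlb.le⟩
            obtain ⟨t, ht, hωt⟩ := hiv hmem
            exact ⟨t, ht, hωt⟩
          obtain ⟨t₀, ht₀, hωt₀, hhlb⟩ := hit_eq hcont hlb_hit
          have ht₀T : t₀ < T := lt_of_le_of_ne ht₀.2 (fun h => by
            rw [h] at hωt₀; linarith)
          have hub_le : hit ω T ub ≤ (t₀ : EReal) := by
            by_contra hcon2
            push_neg at hcon2
            apply hQ2
            rw [hhlb]
            exact lt_min hcon2 (by exact_mod_cast ht₀T)
          have hub_hit : ∃ t ∈ Icc 0 T, ω t = ub := by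
            by_contra hc2
            push_neg at hc2
            have htop : hit ω T ub = ⊤ := hit_top (fun t h1 h2 => hc2 t ⟨h1, h2⟩)
            rw [htop] at hub_le
            exact absurd hub_le (by simp)
          obtain ⟨s₀, hs₀, hωs₀, hhub⟩ := hit_eq hcont hub_hit
          have hs₀t₀ : s₀ ≤ t₀ := by
            rw [hhub] at hub_le; exact_mod_cast hub_le
          have hs₀lt : s₀ < t₀ := lt_of_le_of_ne hs₀t₀ (fun h => by
            rw [h, hωt₀] at hωs₀; linarith)
          apply hQ1
          rw [hhub, hhlb]
          exact lt_min (by exact_mod_cast hs₀lt) (by exact_mod_cast hs₀lt.trans ht₀T)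
        rw [ind_of_neg hP, ind_of_neg hQ1, ind_of_neg hQ2]
        have key : (1 / (ub - lb)) * ω T - lb / (ub - lb) -
            (1 / (ub - lb)) * (ω T - ub) * 0 - (1 / (ub - lb)) * (ω T - lb) * 0 =
            (ω T - lb) / (ub - lb) := by
          field_simp
          ring
        rw [key]
        exact div_nonneg (by linarith) hc.le
end

section
/- Let μ be a centred probability measure on ℝ (μ ≠ δ₀) with distribution function F, let b < 0 < b̄, and suppose the quantity ρ₊⁻¹(F(b)) − F(b) < −b/(b̄−b), where ρ₊⁻¹(p) is defined by m_p^{ρ₊⁻¹(p)} = b̄. Then the equation ∫(x−b) dμ_{F(b)}^ξ = −b has a unique solution ξ ∈ (ρ₊⁻¹(F(b)), 1]. -/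
open MeasureTheory Set

/-- Distribution function of `μ`. -/
noncomputable def distF (μ : Measure ℝ) (x : ℝ) : ℝ := (μ (Iic x)).toReal

/-- Left limit `F(x-)` of the distribution function. -/
noncomputable def distFm (μ : Measure ℝ) (x : ℝ) : ℝ := (μ (Iio x)).toReal

/-- Quantile function of `μ`. -/
noncomputable def quantile (μ : Measure ℝ) (u : ℝ) : ℝ :=
  sInf {x : ℝ | u ≤ distF μ x}

/-- The sub-probability measure `μ_p^q`, i.e. `μ` restricted to its quantile range `(p,q]`,
realised as the image under the quantile function of Lebesgue measure on `(p,q]`. -/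
noncomputable def qmeas (μ : Measure ℝ) (p q : ℝ) : Measure ℝ :=
  (volume.restrict (Ioc p q)).map (quantile μ)

/-- `m̃_p^q = ∫ x dμ_p^q`. -/
noncomputable def mtil (μ : Measure ℝ) (p q : ℝ) : ℝ :=
  ∫ u in Ioc p q, quantile μ u

/-- The barycentre `m_p^q` of `μ` restricted to the quantile range `(p,q]`. -/
noncomputable def bary (μ : Measure ℝ) (p q : ℝ) : ℝ :=
  if p < q then (q - p)⁻¹ * mtil μ p q else quantile μ q

section Aux

open Filter ProbabilityTheory
open scoped Topology

variable (μ : Measure ℝ) [IsProbabilityMeasure μ]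

lemma distF_eq_cdf : distF μ = cdf μ := by
  funext x; exact (cdf_eq_real μ x).symm

lemma distF_mono : Monotone (distF μ) := by
  rw [distF_eq_cdf]; exact monotone_cdf μ

lemma quantile_bddBelow {u : ℝ} (hu : 0 < u) : BddBelow {x : ℝ | u ≤ distF μ x} := by
  obtain ⟨x₀, hx₀⟩ : ∃ x₀ : ℝ, distF μ x₀ < u := by
    have h := (tendsto_cdf_atBot μ).eventually_lt_const hu
    rw [← distF_eq_cdf] at h
    exact h.exists
  refine ⟨x₀, fun x hx => ?_⟩
  by_contra h
  push_neg at h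
  exact absurd (le_trans hx (distF_mono μ h.le)) (not_le.mpr hx₀)

lemma quantile_nonempty {u : ℝ} (hu : u < 1) : {x : ℝ | u ≤ distF μ x}.Nonempty := by
  obtain ⟨x₀, hx₀⟩ : ∃ x₀ : ℝ, u < distF μ x₀ := by
    have h := (tendsto_cdf_atTop μ).eventually_const_lt hu
    rw [← distF_eq_cdf] at h
    exact h.exists
  exact ⟨x₀, hx₀.le⟩

lemma quantile_le_iff {u x : ℝ} (hu0 : 0 < u) (hu1 : u < 1) :
    quantile μ u ≤ x ↔ u ≤ distF μ x := by
  constructor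
  · intro h
    have key : ∀ y, x < y → u ≤ distF μ y := by
      intro y hy
      have hlt : sInf {x : ℝ | u ≤ distF μ x} < y := lt_of_le_of_lt h hy
      obtain ⟨z, hz, hzy⟩ :=
        (csInf_lt_iff (quantile_bddBelow μ hu0) (quantile_nonempty μ hu1)).mp hlt
      exact le_trans hz (distF_mono μ hzy.le)
    have hc : Tendsto (distF μ) (𝓝[>] x) (𝓝 (distF μ x)) := by
      rw [distF_eq_cdf]
      exact ((cdf μ).right_continuous x).tendsto.mono_left
        (nhdsWithin_mono _ Ioi_subset_Ici_self)
    exact ge_of_tendsto hc (eventually_nhdsWithin_of_forall fun y hy => key y hy)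
  · intro h
    exact csInf_le (quantile_bddBelow μ hu0) h

lemma quantile_le {u b : ℝ} (hu0 : 0 < u) (h : u ≤ distF μ b) : quantile μ u ≤ b :=
  csInf_le (quantile_bddBelow μ hu0) h

lemma lb_lt_quantile {u lb : ℝ} (hu : distF μ lb < u) (hu1 : u < 1) :
    lb < quantile μ u := by
  by_contra h
  push_neg at h
  have hu0 : 0 < u := lt_of_le_of_lt ENNReal.toReal_nonneg hu
  exact absurd ((quantile_le_iff μ hu0 hu1).mp h) (not_le.mpr hu)

lemma quantile_monotoneOn : MonotoneOn (quantile μ) (Ioo 0 1) := by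
  intro u hu v hv huv
  exact csInf_le_csInf (quantile_bddBelow μ hu.1) (quantile_nonempty μ hv.2)
    (fun x hx => le_trans huv hx)

lemma quantile_aemeasurable : AEMeasurable (quantile μ) (volume.restrict (Ioo 0 1)) :=
  aemeasurable_restrict_of_monotoneOn measurableSet_Ioo (quantile_monotoneOn μ)

instance : IsProbabilityMeasure (volume.restrict (Ioo (0:ℝ) 1)) := by
  constructor
  rw [Measure.restrict_apply_univ, Real.volume_Ioo]
  norm_num

lemma map_quantile : (volume.restrict (Ioo (0:ℝ) 1)).map (quantile μ) = μ := by
  have : IsProbabilityMeasure ((volume.restrict (Ioo (0:ℝ) 1)).map (quantile μ)) :=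
    Measure.isProbabilityMeasure_map (quantile_aemeasurable μ)
  refine Measure.ext_of_Iic _ μ (fun x => ?_)
  rw [Measure.map_apply_of_aemeasurable (quantile_aemeasurable μ) measurableSet_Iic,
    Measure.restrict_apply' measurableSet_Ioo]
  have hc0 : 0 ≤ distF μ x := ENNReal.toReal_nonneg
  have hc1 : distF μ x ≤ 1 := by
    have := prob_le_one (μ := μ) (s := Iic x)
    simpa [distF] using ENNReal.toReal_le_of_le_ofReal one_pos.le (by simpa using this)
  have hset : quantile μ ⁻¹' Iic x ∩ Ioo 0 1 = Iic (distF μ x) ∩ Ioo 0 1 := by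
    ext u
    simp only [mem_inter_iff, mem_preimage, mem_Iic, mem_Ioo]
    constructor
    · rintro ⟨h, hu⟩
      exact ⟨(quantile_le_iff μ hu.1 hu.2).mp h, hu⟩
    · rintro ⟨h, hu⟩
      exact ⟨(quantile_le_iff μ hu.1 hu.2).mpr h, hu⟩
  rw [hset]
  have h1 : Iic (distF μ x) ∩ Ioo 0 1 ⊆ Ioc 0 (distF μ x) := by
    rintro u ⟨h, hu⟩; exact ⟨hu.1, h⟩
  have h2 : Ioc 0 (distF μ x) ⊆ (Iic (distF μ x) ∩ Ioo 0 1) ∪ {1} := by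
    rintro u ⟨h0, h⟩
    rcases lt_or_ge u 1 with hu1 | hu1
    · exact Or.inl ⟨h, h0, hu1⟩
    · exact Or.inr (le_antisymm (h.trans hc1) hu1)
  have hvol : volume (Iic (distF μ x) ∩ Ioo 0 1) = ENNReal.ofReal (distF μ x) := by
    refine le_antisymm ?_ ?_
    · calc volume (Iic (distF μ x) ∩ Ioo 0 1) ≤ volume (Ioc 0 (distF μ x)) := measure_mono h1
        _ = ENNReal.ofReal (distF μ x) := by rw [Real.volume_Ioc, sub_zero]
    · calc ENNReal.ofReal (distF μ x) = volume (Ioc 0 (distF μ x)) := by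
            rw [Real.volume_Ioc, sub_zero]
        _ ≤ volume ((Iic (distF μ x) ∩ Ioo 0 1) ∪ {1}) := measure_mono h2
        _ ≤ volume (Iic (distF μ x) ∩ Ioo 0 1) + volume ({1} : Set ℝ) := measure_union_le _ _
        _ = volume (Iic (distF μ x) ∩ Ioo 0 1) := by rw [Real.volume_singleton, add_zero]
  rw [hvol]
  exact ENNReal.ofReal_toReal (measure_ne_top μ _)

lemma quantile_integrableOn (hint : Integrable id μ) :
    IntegrableOn (quantile μ) (Ioo 0 1) volume := by
  have h : Integrable (id ∘ quantile μ) (volume.restrict (Ioo (0:ℝ) 1)) := by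
    rw [← integrable_map_measure ?_ (quantile_aemeasurable μ)]
    · rwa [map_quantile]
    · rw [map_quantile]; exact hint.aestronglyMeasurable
  have h' : Integrable (quantile μ) (volume.restrict (Ioo (0:ℝ) 1)) := by
    simpa [Function.comp_def] using h
  exact h'

lemma quantile_integral (hint : Integrable id μ) (hcent : ∫ x, x ∂μ = 0) :
    ∫ u in Ioo (0:ℝ) 1, quantile μ u = 0 := by
  have h := integral_map (φ := quantile μ) (f := fun y : ℝ => y)
    (quantile_aemeasurable μ) ?_
  · rw [map_quantile] at h
    rw [← h, hcent]
  · rw [map_quantile]; exact hint.aestronglyMeasurable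

end Aux

theorem stmt9 (μ : Measure ℝ) [IsProbabilityMeasure μ]
    (hint : Integrable id μ) (hcent : ∫ x, x ∂μ = 0)
    (hne : μ ≠ Measure.dirac 0) (lb ub : ℝ) (hlb : lb < 0) (hub : 0 < ub)
    (r : ℝ) (hr0 : distF μ lb ≤ r) (hr1 : r ≤ 1)
    (hr : bary μ (distF μ lb) r = ub)
    (hlt : r - distF μ lb < -lb / (ub - lb)) :
    ∃! ξ, ξ ∈ Ioc r 1 ∧
      (∫ u in Ioc (distF μ lb) ξ, (quantile μ u - lb)) = -lb := by
  classical
  set p := distF μ lb with hpdef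
  have hp0 : 0 ≤ p := ENNReal.toReal_nonneg
  have hp1 : p ≤ 1 := hr0.trans hr1
  set g : ℝ → ℝ := fun ξ => ∫ u in Ioc p ξ, (quantile μ u - lb) with hgdef
  have hQint : IntegrableOn (quantile μ) (Ioc 0 1) volume :=
    (integrableOn_Ioc_iff_integrableOn_Ioo enorm_ne_top).mpr (quantile_integrableOn μ hint)
  have hQsub : ∀ a b : ℝ, 0 ≤ a → b ≤ 1 → IntegrableOn (quantile μ) (Ioc a b) volume :=
    fun a b ha hb => hQint.mono_set (Ioc_subset_Ioc ha hb)
  have hfsub : ∀ a b : ℝ, 0 ≤ a → b ≤ 1 →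
      IntegrableOn (fun u => quantile μ u - lb) (Ioc a b) volume :=
    fun a b ha hb => (hQsub a b ha hb).sub (integrableOn_const measure_Ioc_lt_top.ne)
  have hsplit : ∀ a b c : ℝ, a ≤ b → b ≤ c → 0 ≤ a → c ≤ 1 →
      ∫ u in Ioc a c, (quantile μ u - lb)
        = (∫ u in Ioc a b, (quantile μ u - lb)) + ∫ u in Ioc b c, (quantile μ u - lb) := by
    intro a b c hab hbc ha hc
    rw [← Ioc_union_Ioc_eq_Ioc hab hbc,
      setIntegral_union (Ioc_disjoint_Ioc_of_le le_rfl) measurableSet_Ioc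
        (hfsub a b ha (hbc.trans hc)) (hfsub b c (ha.trans hab) hc)]
  have hpos : ∀ a b : ℝ, p ≤ a → a < b → b ≤ 1 →
      0 < ∫ u in Ioc a b, (quantile μ u - lb) := by
    intro a b hpa hab hb1
    rw [integral_Ioc_eq_integral_Ioo]
    have hint' : IntegrableOn (fun u => quantile μ u - lb) (Ioo a b) volume :=
      (hfsub a b (hp0.trans hpa) hb1).mono_set Ioo_subset_Ioc_self
    have hfpos : ∀ u ∈ Ioo a b, 0 < quantile μ u - lb := by
      intro u hu
      have h1 : p < u := lt_of_le_of_lt hpa hu.1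
      have h2 : u < 1 := lt_of_lt_of_le hu.2 hb1
      exact sub_pos.mpr (lb_lt_quantile μ h1 h2)
    refine (setIntegral_pos_iff_support_of_nonneg_ae ?_ hint').mpr ?_
    · exact (ae_restrict_iff' measurableSet_Ioo).mpr (ae_of_all _ fun u hu => (hfpos u hu).le)
    · refine lt_of_lt_of_le ?_ (measure_mono (fun u hu => ⟨(hfpos u hu).ne', hu⟩))
      rw [Real.volume_Ioo]
      exact ENNReal.ofReal_pos.mpr (by linarith)
  have hIcc : IntegrableOn (fun u => quantile μ u - lb) (Icc p 1) volume :=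
    (integrableOn_Icc_iff_integrableOn_Ioc enorm_ne_top).mpr (hfsub p 1 hp0 le_rfl)
  have hcont : ContinuousOn g (Icc p 1) := intervalIntegral.continuousOn_primitive hIcc
  have hub_lb : 0 < ub - lb := by linarith
  -- g r < -lb
  have hgr : g r < -lb := by
    rcases eq_or_lt_of_le hr0 with h | h
    · have : g r = 0 := by
        simp only [hgdef, ← h, Ioc_self, Measure.restrict_empty, integral_zero_measure]
      rw [this]; linarith
    · have hrp : (0:ℝ) < r - p := by linarith
      have hmt : mtil μ p r = (r - p) * ub := by
        rw [bary, if_pos h] at hr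
        field_simp at hr
        linarith [hr]
      have hconst : ∫ _ in Ioc p r, (lb : ℝ) = (r - p) * lb := by
        rw [setIntegral_const, Real.volume_real_Ioc_of_le (by linarith),
          smul_eq_mul]
      have hgr' : g r = (r - p) * ub - (r - p) * lb := by
        have hQ := hQsub p r hp0 hr1
        have hC : IntegrableOn (fun _ => lb) (Ioc p r) volume :=
          integrableOn_const measure_Ioc_lt_top.ne
        calc g r = (∫ u in Ioc p r, quantile μ u) - ∫ _ in Ioc p r, (lb:ℝ) :=
              integral_sub hQ hC
          _ = (r - p) * ub - (r - p) * lb := by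
              rw [hconst]
              congr 1
      rw [hgr']
      calc (r - p) * ub - (r - p) * lb = (r - p) * (ub - lb) := by ring
        _ < (-lb / (ub - lb)) * (ub - lb) := by
            exact mul_lt_mul_of_pos_right hlt hub_lb
        _ = -lb := by field_simp
  -- -lb ≤ g 1
  have hg1 : -lb ≤ g 1 := by
    have htot : ∫ u in Ioc (0:ℝ) 1, quantile μ u = 0 := by
      rw [integral_Ioc_eq_integral_Ioo]
      exact quantile_integral μ hint hcent
    have hsplitQ : ∫ u in Ioc (0:ℝ) 1, quantile μ u
        = (∫ u in Ioc (0:ℝ) p, quantile μ u) + ∫ u in Ioc p 1, quantile μ u := by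
      rw [← Ioc_union_Ioc_eq_Ioc hp0 hp1,
        setIntegral_union (Ioc_disjoint_Ioc_of_le le_rfl) measurableSet_Ioc
          (hQsub 0 p le_rfl hp1) (hQsub p 1 hp0 le_rfl)]
    have hlow : ∫ u in Ioc (0:ℝ) p, quantile μ u ≤ p * lb := by
      have hmono : ∫ u in Ioc (0:ℝ) p, quantile μ u ≤ ∫ _ in Ioc (0:ℝ) p, (lb:ℝ) := by
        refine setIntegral_mono_on (hQsub 0 p le_rfl hp1)
          (integrableOn_const measure_Ioc_lt_top.ne) measurableSet_Ioc ?_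
        intro u hu
        exact quantile_le μ hu.1 hu.2
      rwa [setIntegral_const, Real.volume_real_Ioc_of_le hp0, sub_zero,
        smul_eq_mul] at hmono
    have hconst : ∫ _ in Ioc p 1, (lb : ℝ) = (1 - p) * lb := by
      rw [setIntegral_const, Real.volume_real_Ioc_of_le (by linarith),
        smul_eq_mul]
    have hg1' : g 1 = (∫ u in Ioc p 1, quantile μ u) - (1 - p) * lb := by
      calc g 1 = (∫ u in Ioc p 1, quantile μ u) - ∫ _ in Ioc p 1, (lb:ℝ) :=
            integral_sub (hQsub p 1 hp0 le_rfl)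
              (integrableOn_const measure_Ioc_lt_top.ne)
        _ = (∫ u in Ioc p 1, quantile μ u) - (1 - p) * lb := by rw [hconst]
    have hPle : p * lb ≤ 0 := mul_nonpos_of_nonneg_of_nonpos hp0 hlb.le
    nlinarith [hsplitQ, htot, hlow, hg1']
  -- r < 1
  have hrlt1 : r < 1 := by
    rcases eq_or_lt_of_le hr1 with h | h
    · exfalso; rw [h] at hgr; linarith
    · exact h
  -- existence by IVT
  have hivt := intermediate_value_Ioc hrlt1.le (hcont.mono (Icc_subset_Icc_left hr0))
  obtain ⟨ξ, hξmem, hξeq⟩ := hivt ⟨hgr, hg1⟩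
  refine ⟨ξ, ⟨hξmem, hξeq⟩, ?_⟩
  rintro y ⟨hymem, hyeq⟩
  by_contra hne'
  rcases lt_or_gt_of_ne hne' with hyx | hyx
  · have hposyx := hpos y ξ (hr0.trans hymem.1.le) hyx hξmem.2
    have hsp := hsplit p y ξ (hr0.trans hymem.1.le) hyx.le hp0 hξmem.2
    have hξeq' : (∫ u in Ioc p ξ, (quantile μ u - lb)) = -lb := hξeq
    rw [hyeq, hξeq'] at hsp
    linarith
  · have hposyx := hpos ξ y (hr0.trans hξmem.1.le) hyx hymem.2
    have hsp := hsplit p ξ y (hr0.trans hξmem.1.le) hyx.le hp0 hymem.2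
    have hξeq' : (∫ u in Ioc p ξ, (quantile μ u - lb)) = -lb := hξeq
    rw [hyeq, hξeq'] at hsp
    linarith
end
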